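/- Let Δ be the set of roots of a finite, reduced, crystallographic root system, let A ⊆ Δ be a closed subset, and set A₀ := A ∩ (−A). Then: (i) A₀ is closed and symmetric, and for all α, β ∈ A₀ the reflection s_α(β) = β − ⟨β, α∨⟩α lies in A₀; (ii) if α ∈ A₀, β ∈ A \ A₀ and α + β ∈ Δ, then α + β ∈ A \ A₀; (iii) if α, β ∈ A \ A₀ and α + β ∈ Δ, then α + β ∈ A \ A₀. -/

import Mathlib

open Set

variable {ι M N : Type*}

/-- A subset `A` of the set of roots `Δ` is *closed* if whenever `α, β ∈ A` and
`α + β` is a root, `α + β ∈ A`. -/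
def IsClosedSubset (Δ A : Set M) [Add M] : Prop :=
  ∀ α ∈ A, ∀ β ∈ A, α + β ∈ Δ → α + β ∈ A

namespace SymmClosedAux

variable [AddCommGroup M] [Module ℝ M] [AddCommGroup N] [Module ℝ N]
    [Fintype ι] (P : RootPairing ι ℝ M N)

lemma rootForm_symm (x y : M) : P.RootForm x y = P.RootForm y x := by
  simp [RootPairing.rootForm_apply_apply, mul_comm]

lemma two_mul_rootForm (i j : ι) :
    2 * P.RootForm (P.root i) (P.root j) =
      P.RootForm (P.root i) (P.root i) * P.pairing j i := by
  have h := congrArg (P.root' j) (P.rootForm_self_smul_coroot i)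
  simp only [map_smul, map_nsmul, map_sum, RootPairing.Polarization_apply, smul_eq_mul,
    RootPairing.root'_coroot_eq_pairing, nsmul_eq_mul, Nat.cast_ofNat, Finset.mul_sum] at h
  rw [RootPairing.rootForm_apply_apply, Finset.mul_sum, h]
  exact Finset.sum_congr rfl fun k _ => by simp only [RootPairing.root_coroot'_eq_pairing]

lemma cs (i j : ι) (hli : LinearIndependent ℝ ![P.root j, P.root i]) :
    P.RootForm (P.root i) (P.root j) ^ 2 <
      P.RootForm (P.root i) (P.root i) * P.RootForm (P.root j) (P.root j) := by
  set u := P.root j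
  set v := P.root i
  have hv : 0 < P.RootForm v v := P.rootForm_pos_of_ne_zero (Submodule.subset_span (mem_range_self i)) (P.ne_zero i)
  have hw : P.RootForm v v • u - P.RootForm u v • v ≠ 0 := by
    intro h
    have := (LinearIndependent.pair_iff.mp hli (P.RootForm v v) (-(P.RootForm u v))
      (by rw [neg_smul, ← sub_eq_add_neg]; exact h)).1
    exact hv.ne' this
  have hpos : 0 < P.RootForm (P.RootForm v v • u - P.RootForm u v • v)
      (P.RootForm v v • u - P.RootForm u v • v) := by
    refine P.rootForm_pos_of_ne_zero ?_ hw
    exact Submodule.sub_mem _ (Submodule.smul_mem _ _ (Submodule.subset_span (mem_range_self j)))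
      (Submodule.smul_mem _ _ (Submodule.subset_span (mem_range_self i)))
  have hs : P.RootForm u v = P.RootForm v u := rootForm_symm P u v
  simp only [map_sub, map_smul, LinearMap.sub_apply, LinearMap.smul_apply, smul_eq_mul] at hpos
  rw [hs] at hpos
  nlinarith [hpos, hv, mul_pos hv hv, sq_nonneg (P.RootForm v u)]

lemma prod_lt_four (i j : ι) (hli : LinearIndependent ℝ ![P.root j, P.root i]) :
    P.pairing j i * P.pairing i j < 4 := by
  have h1 := two_mul_rootForm P i j
  have h2 := two_mul_rootForm P j i
  have h3 := cs P i j hli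
  have hs : P.RootForm (P.root j) (P.root i) = P.RootForm (P.root i) (P.root j) :=
    rootForm_symm P _ _
  have hi : 0 < P.RootForm (P.root i) (P.root i) := P.rootForm_pos_of_ne_zero (Submodule.subset_span (mem_range_self i)) (P.ne_zero i)
  have hj : 0 < P.RootForm (P.root j) (P.root j) := P.rootForm_pos_of_ne_zero (Submodule.subset_span (mem_range_self j)) (P.ne_zero j)
  have hmul : (P.RootForm (P.root i) (P.root i) * P.pairing j i) *
      (P.RootForm (P.root j) (P.root j) * P.pairing i j) =
      4 * P.RootForm (P.root i) (P.root j) ^ 2 := by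
    rw [← h1, ← h2, hs]; ring
  nlinarith [hmul, h3, mul_pos hi hj]

lemma pairing_pos_iff (i j : ι) (hpos : 0 < P.pairing j i) : 0 < P.pairing i j := by
  have h1 := two_mul_rootForm P i j
  have h2 := two_mul_rootForm P j i
  have hs : P.RootForm (P.root j) (P.root i) = P.RootForm (P.root i) (P.root j) :=
    rootForm_symm P _ _
  have hi : 0 < P.RootForm (P.root i) (P.root i) := P.rootForm_pos_of_ne_zero (Submodule.subset_span (mem_range_self i)) (P.ne_zero i)
  have hj : 0 < P.RootForm (P.root j) (P.root j) := P.rootForm_pos_of_ne_zero (Submodule.subset_span (mem_range_self j)) (P.ne_zero j)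
  have hB : 0 < P.RootForm (P.root i) (P.root j) := by nlinarith [mul_pos hi hpos]
  nlinarith

lemma neg_root_mem (k : ι) : -P.root k ∈ range P.root :=
  ⟨P.reflectionPerm k k, by rw [RootPairing.root_reflectionPerm,
    RootPairing.reflection_apply_self]⟩

lemma pairing_neg_two {i j : ι} (h : P.root j = -P.root i) : P.pairing j i = -2 := by
  have hj : j = P.reflectionPerm i i := P.root.injective (by
    rw [RootPairing.root_reflectionPerm, RootPairing.reflection_apply_self]; exact h)
  rw [hj, RootPairing.pairing_reflectionPerm_self_left, RootPairing.pairing_same]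


lemma key (hcrys : P.IsCrystallographic) (hred : P.IsReduced) {i j : ι}
    (hne : P.root j ≠ P.root i) (hpos : 0 < P.pairing j i) :
    P.root j - P.root i ∈ range P.root := by
  by_cases hli : LinearIndependent ℝ ![P.root j, P.root i]
  · obtain ⟨n, hn⟩ := (by simpa using hcrys.exists_value j i : ∃ n : ℤ, (n : ℝ) = P.pairing j i)
    obtain ⟨m, hm⟩ := (by simpa using hcrys.exists_value i j : ∃ n : ℤ, (n : ℝ) = P.pairing i j)
    have hn0 : 0 < n := by rw [← hn] at hpos; exact_mod_cast hpos
    have hm0 : 0 < m := by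
      have := pairing_pos_iff P i j hpos
      rw [← hm] at this; exact_mod_cast this
    have hlt : n * m < 4 := by
      have : (n : ℝ) * m < 4 := by rw [hn, hm]; exact prod_lt_four P i j hli
      exact_mod_cast this
    have h1 : n = 1 ∨ m = 1 := by
      by_contra hc
      push_neg at hc
      have h2 : 2 ≤ n := by omega
      have h3 : 2 ≤ m := by omega
      nlinarith
    rcases h1 with h | h
    · refine ⟨P.reflectionPerm i j, ?_⟩
      rw [RootPairing.root_reflectionPerm, RootPairing.reflection_apply_root, ← hn, h]
      norm_num
    · have h1 : P.root (P.reflectionPerm j i) = P.root i - P.root j := by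
        rw [RootPairing.root_reflectionPerm, RootPairing.reflection_apply_root, ← hm, h]
        norm_num
      refine ⟨P.reflectionPerm (P.reflectionPerm j i) (P.reflectionPerm j i), ?_⟩
      rw [RootPairing.root_reflectionPerm, RootPairing.reflection_apply_self, h1, neg_sub]
  · rcases hred.eq_or_eq_neg j i hli with h | h
    · exact absurd h hne
    · rw [pairing_neg_two P h] at hpos; norm_num at hpos

lemma aux_refl (hcrys : P.IsCrystallographic) (hred : P.IsReduced)
    (S : Set M) (hclosed : IsClosedSubset (range P.root) S)
    (hsymm : ∀ x ∈ S, -x ∈ S) {i j : ι}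
    (hi : P.root i ∈ S) (hj : P.root j ∈ S)
    (hne1 : P.root j ≠ P.root i) (hne2 : P.root j ≠ -P.root i)
    (hpos : 0 < P.pairing j i) :
    P.reflection i (P.root j) ∈ S := by
  have hli : LinearIndependent ℝ ![P.root j, P.root i] := by
    by_contra hc
    rcases hred.eq_or_eq_neg j i hc with h | h
    · exact hne1 h
    · exact hne2 h
  obtain ⟨z, hz⟩ := (by simpa using hcrys.exists_value j i : ∃ n : ℤ, (n : ℝ) = P.pairing j i)
  obtain ⟨m, hm⟩ := (by simpa using hcrys.exists_value i j : ∃ n : ℤ, (n : ℝ) = P.pairing i j)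
  have hz0 : 0 < z := by rw [← hz] at hpos; exact_mod_cast hpos
  have hm0 : 0 < m := by
    have := pairing_pos_iff P i j hpos
    rw [← hm] at this; exact_mod_cast this
  have hlt : z * m < 4 := by
    have : (z : ℝ) * m < 4 := by rw [hz, hm]; exact prod_lt_four P i j hli
    exact_mod_cast this
  have hz3 : z ≤ 3 := by nlinarith
  have hd1 : P.root j - P.root i ∈ range P.root := key P hcrys hred hne1 hpos
  have hS1 : P.root j - P.root i ∈ S := by
    rw [sub_eq_add_neg]
    exact hclosed _ hj _ (hsymm _ hi) (by rw [← sub_eq_add_neg]; exact hd1)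
  have hΔrefl : P.reflection i (P.root j) ∈ range P.root :=
    ⟨P.reflectionPerm i j, P.root_reflectionPerm i j⟩
  rw [RootPairing.reflection_apply_root, ← hz] at hΔrefl ⊢
  interval_cases z
  · simpa using hS1
  · -- z = 2
    have e2 : P.root j - ((2 : ℤ) : ℝ) • P.root i = (P.root j - P.root i) + (-P.root i) := by
      push_cast; module
    rw [e2]
    exact hclosed _ hS1 _ (hsymm _ hi) (by rw [← e2]; exact hΔrefl)
  · -- z = 3
    obtain ⟨k, hk⟩ := hd1
    have hkpair : P.pairing k i = 1 := by
      rw [← P.root_coroot'_eq_pairing i k, hk, map_sub, P.root_coroot'_eq_pairing,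
        P.root_coroot'_eq_pairing, RootPairing.pairing_same, ← hz]
      norm_num
    have hkne : P.root k ≠ P.root i := by
      intro hkk
      rw [hk] at hkk
      have hjj : P.root j = P.root i + P.root i := sub_eq_iff_eq_add.mp hkk
      have := (LinearIndependent.pair_iff.mp hli 1 (-2) (by rw [hjj]; module)).1
      norm_num at this
    have hd2 : P.root k - P.root i ∈ range P.root :=
      key P hcrys hred hkne (by rw [hkpair]; norm_num)
    have hkS : P.root k ∈ S := by rw [hk]; exact hS1
    have hS2 : P.root k - P.root i ∈ S := by
      rw [sub_eq_add_neg]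
      exact hclosed _ hkS _ (hsymm _ hi) (by rw [← sub_eq_add_neg]; exact hd2)
    have e3 : P.root j - ((3 : ℤ) : ℝ) • P.root i = (P.root k - P.root i) + (-P.root i) := by
      rw [hk]; push_cast; module
    rw [e3]
    exact hclosed _ hS2 _ (hsymm _ hi) (by rw [← e3]; exact hΔrefl)

end SymmClosedAux

/-- Let `Δ` be the set of roots of a finite, reduced, crystallographic root
system, `A ⊆ Δ` a closed subset, and `A₀ := A ∩ (-A)`.  Then:
(i) `A₀` is closed, symmetric, and stable under the reflections `s_α` for `α ∈ A₀`;
(ii) if `α ∈ A₀`, `β ∈ A \ A₀` and `α + β ∈ Δ`, then `α + β ∈ A \ A₀`;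
(iii) if `α, β ∈ A \ A₀` and `α + β ∈ Δ`, then `α + β ∈ A \ A₀`. -/
theorem symmetric_part_of_closed_subset
    [AddCommGroup M] [Module ℝ M] [AddCommGroup N] [Module ℝ N]
    [FiniteDimensional ℝ M] [Fintype ι]
    (P : RootPairing ι ℝ M N) (hP_span : Submodule.span ℝ (range P.root) = ⊤)
    (hcrys : P.IsCrystallographic) (hred : P.IsReduced)
    (A : Set M)
    (hAΔ : A ⊆ range P.root)
    (hAclosed : IsClosedSubset (range P.root) A)
    (A₀ : Set M) (hA₀ : A₀ = A ∩ {v | -v ∈ A}) :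
    (IsClosedSubset (range P.root) A₀ ∧ (∀ α ∈ A₀, -α ∈ A₀) ∧
      (∀ i : ι, P.root i ∈ A₀ → ∀ β ∈ A₀, P.reflection i β ∈ A₀)) ∧
    (∀ α ∈ A₀, ∀ β ∈ A \ A₀, α + β ∈ range P.root → α + β ∈ A \ A₀) ∧
    (∀ α ∈ A \ A₀, ∀ β ∈ A \ A₀, α + β ∈ range P.root → α + β ∈ A \ A₀) := by
  subst hA₀
  set S := A ∩ {v | -v ∈ A} with hS
  have hnegΔ : ∀ x ∈ range P.root, -x ∈ range P.root := by
    rintro _ ⟨k, rfl⟩; exact SymmClosedAux.neg_root_mem P k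
  have hSsub : S ⊆ A := inter_subset_left
  have hclosed : IsClosedSubset (range P.root) S := by
    rintro α ⟨hαA, hαN⟩ β ⟨hβA, hβN⟩ hΔ
    refine ⟨hAclosed α hαA β hβA hΔ, ?_⟩
    have h2 : -α + -β ∈ range P.root := by rw [← neg_add]; exact hnegΔ _ hΔ
    have h3 := hAclosed _ hαN _ hβN h2
    show -(α + β) ∈ A
    rw [neg_add]; exact h3
  have hsymm : ∀ x ∈ S, -x ∈ S := by
    rintro x ⟨h1, h2⟩
    exact ⟨h2, by simpa using h1⟩
  have hmain2 : ∀ α ∈ A, ∀ β ∈ A \ S, α + β ∈ range P.root → α + β ∈ A \ S := by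
    rintro α hα β ⟨hβA, hβS⟩ hΔ
    refine ⟨hAclosed α hα β hβA hΔ, fun hmem => ?_⟩
    have hneg : -(α + β) ∈ A := hmem.2
    have hsum : -(α + β) + α ∈ range P.root := by
      rw [show -(α + β) + α = -β by abel]
      exact hnegΔ _ (hAΔ hβA)
    have h5 := hAclosed _ hneg _ hα hsum
    rw [show -(α + β) + α = -β by abel] at h5
    exact hβS ⟨hβA, h5⟩
  refine ⟨⟨hclosed, hsymm, ?_⟩, fun α hα => hmain2 α (hSsub hα), fun α hα => hmain2 α hα.1⟩
  intro i hi β hβ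
  obtain ⟨j, rfl⟩ := hAΔ (hSsub hβ)
  by_cases h1 : P.root j = P.root i
  · rw [h1, RootPairing.reflection_apply_self]; exact hsymm _ hi
  by_cases h2 : P.root j = -P.root i
  · rw [h2, map_neg, RootPairing.reflection_apply_self, neg_neg]; exact hi
  rcases lt_trichotomy (P.pairing j i) 0 with hlt | heq | hgt
  · have hroot : P.root (P.reflectionPerm i i) = -P.root i := by
      rw [RootPairing.root_reflectionPerm, RootPairing.reflection_apply_self]
    have hii' : P.root (P.reflectionPerm i i) ∈ S := by rw [hroot]; exact hsymm _ hi
    have hp : 0 < P.pairing j (P.reflectionPerm i i) := by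
      rw [RootPairing.pairing_reflectionPerm_self_right]; linarith
    have hne1 : P.root j ≠ P.root (P.reflectionPerm i i) := by rw [hroot]; exact h2
    have hne2 : P.root j ≠ -P.root (P.reflectionPerm i i) := by rw [hroot, neg_neg]; exact h1
    have hmem := SymmClosedAux.aux_refl P hcrys hred S hclosed hsymm hii' hβ hne1 hne2 hp
    have heq2 : P.reflection i (P.root j) = P.reflection (P.reflectionPerm i i) (P.root j) := by
      rw [RootPairing.reflection_apply_root, RootPairing.reflection_apply_root, hroot,
        RootPairing.pairing_reflectionPerm_self_right]
      module
    rw [heq2]; exact hmem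
  · rw [RootPairing.reflection_apply_root, heq, zero_smul, sub_zero]; exact hβ
  · exact SymmClosedAux.aux_refl P hcrys hred S hclosed hsymm hi hβ h1 h2 hgt
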